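/- Let à be a real symmetric 3×3 matrix with eigenvalues λ > 0 ≥ ν₁ ≥ ν₂, D a positive diagonal matrix, and v a λ-eigenvector of Ã. Define H^± = {x : (D^{1/2}x)ᵀÃ(D^{1/2}x) = 2, ±⟨D^{1/2}x, v⟩ ≥ 0}. Then for any x ∈ H⁺ and y ∈ H⁻, one has (D^{1/2}(x+y))ᵀ Ã (D^{1/2}(x+y)) ≤ 0. -/

import Mathlib

open Matrix

set_option maxHeartbeats 1000000 in
private lemma sep_key3 (lam s t a b p q r w : ℝ) (hlam : 0 < lam) (hs : s ≤ 0) (ht : t ≤ 0)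
    (h1 : lam * a ^ 2 + s * p ^ 2 + t * q ^ 2 = 2)
    (h2 : lam * b ^ 2 + s * r ^ 2 + t * w ^ 2 = 2)
    (hab : a * b ≤ 0) :
    lam * (a + b) ^ 2 + s * (p + r) ^ 2 + t * (q + w) ^ 2 ≤ 0 := by
  set qX : ℝ := -(s * p ^ 2 + t * q ^ 2) with hqXdef
  set qY : ℝ := -(s * r ^ 2 + t * w ^ 2) with hqYdef
  have hqX : 0 ≤ qX := by
    have := mul_nonpos_of_nonpos_of_nonneg hs (sq_nonneg p)
    have := mul_nonpos_of_nonpos_of_nonneg ht (sq_nonneg q)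
    simp only [hqXdef]; linarith
  have hqY : 0 ≤ qY := by
    have := mul_nonpos_of_nonpos_of_nonneg hs (sq_nonneg r)
    have := mul_nonpos_of_nonpos_of_nonneg ht (sq_nonneg w)
    simp only [hqYdef]; linarith
  set m : ℝ := lam * a * b with hmdef
  set n : ℝ := s * (p * r) + t * (q * w) with hndef
  have hm : m ≤ 0 := by
    have : lam * (a * b) ≤ 0 := mul_nonpos_of_nonneg_of_nonpos hlam.le hab
    simp only [hmdef]; linarith [this]
  have hX : lam * a ^ 2 = 2 + qX := by simp only [hqXdef]; linarith
  have hY : lam * b ^ 2 = 2 + qY := by simp only [hqYdef]; linarith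
  have hm2 : m ^ 2 = (2 + qX) * (2 + qY) := by
    calc m ^ 2 = (lam * a ^ 2) * (lam * b ^ 2) := by simp only [hmdef]; ring
    _ = (2 + qX) * (2 + qY) := by rw [hX, hY]
  have hn2 : n ^ 2 ≤ qX * qY := by
    have hst : 0 ≤ (-s) * (-t) * (p * w - q * r) ^ 2 :=
      mul_nonneg (mul_nonneg (neg_nonneg.2 hs) (neg_nonneg.2 ht)) (sq_nonneg _)
    simp only [hndef, hqXdef, hqYdef]; nlinarith [hst]
  set N : ℝ := |n| with hNdef
  have hN0 : 0 ≤ N := abs_nonneg n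
  have hNle : n ≤ N := le_abs_self n
  have hN2 : N ^ 2 = n ^ 2 := sq_abs n
  have hsum : 0 ≤ 2 * N + qX + qY := by linarith
  have step1 : 2 * N ≤ qX + qY := by
    nlinarith [sq_nonneg (qX - qY), hn2, hN2, hqX, hqY, hN0, hsum]
  have h2Nm : 0 ≤ 2 + N - m := by linarith
  have step2 : 2 + N ≤ -m := by
    nlinarith [hm2, hn2, hN2, step1, h2Nm, hN0]
  have step3 : m + n ≤ -2 := by linarith
  nlinarith [step3, h1, h2]

private lemma sep_no_double (lam nu1 nu2 w : ℝ) (hlam : 0 < lam) (h1 : nu1 ≤ 0) (h2 : nu2 ≤ 0)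
    (hp : ∀ t : ℝ, (t - lam) * (t - lam) * (t - w) = (t - lam) * (t - nu1) * (t - nu2)) :
    False := by
  have e1 := hp (lam + 1)
  have e2 := hp (lam + 2)
  have huv : 0 < (lam - nu1) * (lam - nu2) :=
    mul_pos (by linarith) (by linarith)
  nlinarith [e1, e2, huv]

private lemma sep_perm_case (lam nu1 nu2 m1 m2 : ℝ) (hlam : 0 < lam) (h1 : nu1 ≤ 0)
    (h2 : nu2 ≤ 0)
    (hp : ∀ t : ℝ, (t - lam) * (t - m1) * (t - m2) = (t - lam) * (t - nu1) * (t - nu2)) :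
    m1 ≤ 0 ∧ m2 ≤ 0 := by
  constructor
  · have hr : (m1 - lam) * (m1 - nu1) * (m1 - nu2) = 0 := by
      have := hp m1; nlinarith [this]
    rcases mul_eq_zero.mp hr with h | h
    · rcases mul_eq_zero.mp h with h' | h'
      · exfalso
        have hm1 : m1 = lam := by linarith [sub_eq_zero.mp h']
        rw [hm1] at hp
        exact sep_no_double lam nu1 nu2 m2 hlam h1 h2 hp
      · have := sub_eq_zero.mp h'; linarith
    · have := sub_eq_zero.mp h; linarith
  · have hr : (m2 - lam) * (m2 - nu1) * (m2 - nu2) = 0 := by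
      have := hp m2; nlinarith [this]
    rcases mul_eq_zero.mp hr with h | h
    · rcases mul_eq_zero.mp h with h' | h'
      · exfalso
        have hm2 : m2 = lam := by linarith [sub_eq_zero.mp h']
        rw [hm2] at hp
        exact sep_no_double lam nu1 nu2 m1 hlam h1 h2
          (fun t => by linear_combination hp t)
      · have := sub_eq_zero.mp h'; linarith
    · have := sub_eq_zero.mp h; linarith

set_option maxHeartbeats 1000000 in
theorem separation_lemma_for_quadric (A : Matrix (Fin 3) (Fin 3) ℝ) (hA : A.IsSymm)
    (lam nu1 nu2 : ℝ)
    (hchar : ∀ t : ℝ, (t • (1 : Matrix (Fin 3) (Fin 3) ℝ) - A).det =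
      (t - lam) * (t - nu1) * (t - nu2))
    (hlam : 0 < lam) (hnu1 : nu1 ≤ 0) (hnu2 : nu2 ≤ 0)
    (v : Fin 3 → ℝ) (hv : A.mulVec v = lam • v) (hv0 : v ≠ 0)
    (d : Fin 3 → ℝ) (hd : ∀ i, 0 < d i)
    (x y : Fin 3 → ℝ)
    (hx2 : (fun i => Real.sqrt (d i) * x i) ⬝ᵥ A.mulVec (fun i => Real.sqrt (d i) * x i) = 2)
    (hxv : 0 ≤ (fun i => Real.sqrt (d i) * x i) ⬝ᵥ v)
    (hy2 : (fun i => Real.sqrt (d i) * y i) ⬝ᵥ A.mulVec (fun i => Real.sqrt (d i) * y i) = 2)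
    (hyv : (fun i => Real.sqrt (d i) * y i) ⬝ᵥ v ≤ 0) :
    (fun i => Real.sqrt (d i) * (x + y) i) ⬝ᵥ
        A.mulVec (fun i => Real.sqrt (d i) * (x + y) i) ≤ 0 := by
  classical
  have hA' : A.IsHermitian := by
    rw [Matrix.IsHermitian, Matrix.conjTranspose_eq_transpose_of_trivial]; exact hA
  set μ : Fin 3 → ℝ := hA'.eigenvalues with hμdef
  set B : Fin 3 → Fin 3 → ℝ := fun i j => hA'.eigenvectorBasis i j with hBdef
  set c : (Fin 3 → ℝ) → Fin 3 → ℝ := fun w i => B i ⬝ᵥ w with hcdef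
  -- representation in the eigenbasis
  have hrepr : ∀ w : Fin 3 → ℝ, w = ∑ i, c w i • B i := by
    intro w
    have h := hA'.eigenvectorBasis.sum_repr' ((WithLp.equiv 2 (Fin 3 → ℝ)).symm w)
    have h2 := congrArg (⇑(WithLp.linearEquiv 2 ℝ (Fin 3 → ℝ))) h
    simp only [map_sum, _root_.map_smul, WithLp.linearEquiv_apply, Equiv.apply_symm_apply] at h2
    have hBeq : ∀ i, (WithLp.equiv 2 (Fin 3 → ℝ)) (hA'.eigenvectorBasis i) = B i := by
      intro i; funext j; simp [hBdef, WithLp.equiv_apply]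
    have hinner : ∀ i,
        (inner ℝ (hA'.eigenvectorBasis i) ((WithLp.equiv 2 (Fin 3 → ℝ)).symm w) : ℝ) = c w i := by
      intro i
      simp [hcdef, hBdef, dotProduct, PiLp.inner_apply, RCLike.inner_apply, starRingEnd_apply,
        WithLp.equiv_symm_apply, mul_comm]
    simp only [hinner, hBeq] at h2
    exact h2.symm
  have hABi : ∀ i, A.mulVec (B i) = μ i • B i := fun i => hA'.mulVec_eigenvectorBasis i
  have hcomm : ∀ u : Fin 3 → ℝ, ∀ i, u ⬝ᵥ B i = c u i := by
    intro u i; rw [hcdef]; exact dotProduct_comm u (B i)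
  -- bilinear expansion
  have expand : ∀ w z : Fin 3 → ℝ, w ⬝ᵥ A.mulVec z = ∑ i, μ i * c w i * c z i := by
    intro w z
    conv_lhs => rw [hrepr z, Fin.sum_univ_three]
    rw [Matrix.mulVec_add, Matrix.mulVec_add, Matrix.mulVec_smul, Matrix.mulVec_smul,
      Matrix.mulVec_smul, hABi, hABi, hABi, Fin.sum_univ_three]
    simp only [dotProduct_add, dotProduct_smul, smul_eq_mul, smul_smul, hcomm]
    ring
  -- characteristic polynomial identity
  have hpoly : ∀ t : ℝ, (t - μ 0) * (t - μ 1) * (t - μ 2) =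
      (t - lam) * (t - nu1) * (t - nu2) := by
    have hst := hA'.spectral_theorem
    rw [← hμdef, Unitary.conjStarAlgAut_apply] at hst
    set U : Matrix (Fin 3) (Fin 3) ℝ := (hA'.eigenvectorUnitary : Matrix (Fin 3) (Fin 3) ℝ)
      with hUdef
    have hU2 : U * star U = 1 := Matrix.mem_unitaryGroup_iff.mp hA'.eigenvectorUnitary.2
    intro t
    have hdiag : Matrix.diagonal (fun i => t - μ i) =
        t • (1 : Matrix (Fin 3) (Fin 3) ℝ) - Matrix.diagonal (RCLike.ofReal ∘ μ) := by
      rw [Matrix.smul_one_eq_diagonal, Matrix.diagonal_sub]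
      congr 1
    have hkey : t • (1 : Matrix (Fin 3) (Fin 3) ℝ) - A =
        U * Matrix.diagonal (fun i => t - μ i) * star U := by
      have hmid : U * (t • (1 : Matrix (Fin 3) (Fin 3) ℝ)) * star U =
          t • (1 : Matrix (Fin 3) (Fin 3) ℝ) := by
        rw [Matrix.mul_smul, mul_one, Matrix.smul_mul, hU2]
      rw [hdiag, Matrix.mul_sub, Matrix.sub_mul, hmid, ← hst]
    have hdet : (t • (1 : Matrix (Fin 3) (Fin 3) ℝ) - A).det =
        (t - μ 0) * (t - μ 1) * (t - μ 2) := by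
      rw [hkey, Matrix.det_mul, Matrix.det_mul]
      have hdetU : U.det * (star U).det = 1 := by rw [← Matrix.det_mul, hU2, Matrix.det_one]
      calc U.det * (Matrix.diagonal fun i => t - μ i).det * (star U).det
          = (Matrix.diagonal fun i => t - μ i).det * (U.det * (star U).det) := by ring
        _ = (t - μ 0) * (t - μ 1) * (t - μ 2) := by
            rw [hdetU, mul_one, Matrix.det_diagonal, Fin.prod_univ_three]
    rw [← hdet, hchar t]
  -- coordinates of v
  have hcoordv : ∀ i, (μ i - lam) * c v i = 0 := by
    intro i
    have h1 : B i ⬝ᵥ A.mulVec v = μ i * c v i := by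
      rw [Matrix.dotProduct_mulVec, ← Matrix.mulVec_transpose, hA, hABi, smul_dotProduct,
        smul_eq_mul, hcdef]
    have h2 : B i ⬝ᵥ A.mulVec v = lam * c v i := by
      rw [hv, dotProduct_smul, smul_eq_mul, hcdef]
    linear_combination h2 - h1
  -- the positive eigendirection
  obtain ⟨i0, hi0⟩ : ∃ i, c v i ≠ 0 := by
    by_contra h
    push_neg at h
    apply hv0
    have := hrepr v
    simpa [h] using this
  have hμi0 : μ i0 = lam := by
    rcases mul_eq_zero.mp (hcoordv i0) with h' | h'
    · linarith [sub_eq_zero.mp h']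
    · exact absurd h' hi0
  -- set up the concrete vectors
  set X : Fin 3 → ℝ := fun i => Real.sqrt (d i) * x i with hXdef
  set Y : Fin 3 → ℝ := fun i => Real.sqrt (d i) * y i with hYdef
  have hXY : (fun i => Real.sqrt (d i) * (x + y) i) = fun i => X i + Y i := by
    funext i; simp [hXdef, hYdef, mul_add]
  rw [hXY]
  have hcsum : ∀ i, c (fun j => X j + Y j) i = c X i + c Y i := by
    intro i
    simp only [hcdef]
    exact dotProduct_add _ _ _
  have hmain := expand (fun j => X j + Y j) (fun j => X j + Y j)
  simp only [hcsum] at hmain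
  rw [hmain, Fin.sum_univ_three]
  have hX2 : μ 0 * c X 0 * c X 0 + μ 1 * c X 1 * c X 1 + μ 2 * c X 2 * c X 2 = 2 := by
    have h := expand X X
    rw [Fin.sum_univ_three] at h
    exact h.symm.trans hx2
  have hY2 : μ 0 * c Y 0 * c Y 0 + μ 1 * c Y 1 * c Y 1 + μ 2 * c Y 2 * c Y 2 = 2 := by
    have h := expand Y Y
    rw [Fin.sum_univ_three] at h
    exact h.symm.trans hy2
  rw [hrepr v, Fin.sum_univ_three] at hxv hyv
  simp only [dotProduct_add, dotProduct_smul, smul_eq_mul, hcomm] at hxv hyv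
  fin_cases i0
  · -- i0 = 0
    rw [show ((⟨0, by norm_num⟩ : Fin 3)) = (0 : Fin 3) from rfl] at hμi0 hi0
    rw [hμi0] at hpoly hX2 hY2 ⊢
    obtain ⟨hm1, hm2⟩ := sep_perm_case lam nu1 nu2 (μ 1) (μ 2) hlam hnu1 hnu2 hpoly
    have hc1 : c v 1 = 0 := by
      rcases mul_eq_zero.mp (hcoordv 1) with h' | h'
      · exfalso; have := sub_eq_zero.mp h'; linarith
      · exact h'
    have hc2 : c v 2 = 0 := by
      rcases mul_eq_zero.mp (hcoordv 2) with h' | h'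
      · exfalso; have := sub_eq_zero.mp h'; linarith
      · exact h'
    simp only [hc1, hc2, zero_mul, add_zero] at hxv hyv
    have hab : c X 0 * c Y 0 ≤ 0 := by
      have hb2 : 0 < c v 0 * c v 0 := mul_self_pos.mpr hi0
      nlinarith [hxv, hyv, hb2]
    have hk := sep_key3 lam (μ 1) (μ 2) (c X 0) (c Y 0) (c X 1) (c X 2) (c Y 1) (c Y 2)
      hlam hm1 hm2 (by linear_combination hX2) (by linear_combination hY2) hab
    nlinarith [hk]
  · -- i0 = 1
    rw [show ((⟨1, by norm_num⟩ : Fin 3)) = (1 : Fin 3) from rfl] at hμi0 hi0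
    rw [hμi0] at hpoly hX2 hY2 ⊢
    obtain ⟨hm1, hm2⟩ := sep_perm_case lam nu1 nu2 (μ 0) (μ 2) hlam hnu1 hnu2
      (fun t => by linear_combination hpoly t)
    have hc1 : c v 0 = 0 := by
      rcases mul_eq_zero.mp (hcoordv 0) with h' | h'
      · exfalso; have := sub_eq_zero.mp h'; linarith
      · exact h'
    have hc2 : c v 2 = 0 := by
      rcases mul_eq_zero.mp (hcoordv 2) with h' | h'
      · exfalso; have := sub_eq_zero.mp h'; linarith
      · exact h'
    simp only [hc1, hc2, zero_mul, add_zero, zero_add] at hxv hyv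
    have hab : c X 1 * c Y 1 ≤ 0 := by
      have hb2 : 0 < c v 1 * c v 1 := mul_self_pos.mpr hi0
      nlinarith [hxv, hyv, hb2]
    have hk := sep_key3 lam (μ 0) (μ 2) (c X 1) (c Y 1) (c X 0) (c X 2) (c Y 0) (c Y 2)
      hlam hm1 hm2 (by linear_combination hX2) (by linear_combination hY2) hab
    nlinarith [hk]
  · -- i0 = 2
    rw [show ((⟨2, by norm_num⟩ : Fin 3)) = (2 : Fin 3) from rfl] at hμi0 hi0
    rw [hμi0] at hpoly hX2 hY2 ⊢
    obtain ⟨hm1, hm2⟩ := sep_perm_case lam nu1 nu2 (μ 0) (μ 1) hlam hnu1 hnu2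
      (fun t => by linear_combination hpoly t)
    have hc1 : c v 0 = 0 := by
      rcases mul_eq_zero.mp (hcoordv 0) with h' | h'
      · exfalso; have := sub_eq_zero.mp h'; linarith
      · exact h'
    have hc2 : c v 1 = 0 := by
      rcases mul_eq_zero.mp (hcoordv 1) with h' | h'
      · exfalso; have := sub_eq_zero.mp h'; linarith
      · exact h'
    simp only [hc1, hc2, zero_mul, add_zero, zero_add] at hxv hyv
    have hab : c X 2 * c Y 2 ≤ 0 := by
      have hb2 : 0 < c v 2 * c v 2 := mul_self_pos.mpr hi0
      nlinarith [hxv, hyv, hb2]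
    have hk := sep_key3 lam (μ 0) (μ 1) (c X 2) (c Y 2) (c X 0) (c X 1) (c Y 0) (c Y 1)
      hlam hm1 hm2 (by linear_combination hX2) (by linear_combination hY2) hab
    nlinarith [hk]
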